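/- In a saturated pure partial plane of order n (with n ≥ 1), no point has degree exactly n; that is, no point lies on exactly n of the lines. -/

import Mathlib

/-- A pure partial plane (PPP) of order `n`: a finite collection of distinct lines,
each an `(n+1)`-element subset of a point set of `n^2+n+1` points, such that any two
distinct lines intersect in exactly one point. -/
def IsPPP (n : ℕ) (L : Finset (Finset (Fin (n ^ 2 + n + 1)))) : Prop :=
  (∀ ℓ ∈ L, ℓ.card = n + 1) ∧
    ∀ ℓ₁ ∈ L, ∀ ℓ₂ ∈ L, ℓ₁ ≠ ℓ₂ → (ℓ₁ ∩ ℓ₂).card = 1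

/-- The degree of a point: the number of lines of the collection containing it. -/
def ppDeg {n : ℕ} (L : Finset (Finset (Fin (n ^ 2 + n + 1))))
    (p : Fin (n ^ 2 + n + 1)) : ℕ :=
  (L.filter fun ℓ => p ∈ ℓ).card

/-- A PPP is saturated if no `(n+1)`-element subset of the point set not already in the
collection intersects every line of the collection in exactly one point. -/
def IsSaturated (n : ℕ) (L : Finset (Finset (Fin (n ^ 2 + n + 1)))) : Prop :=
  ¬ ∃ ℓ' : Finset (Fin (n ^ 2 + n + 1)), ℓ' ∉ L ∧ ℓ'.card = n + 1 ∧
      ∀ ℓ ∈ L, (ℓ' ∩ ℓ).card = 1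

/-- In a saturated pure partial plane of order `n ≥ 1`, no point lies on exactly `n`
lines. -/
theorem sppp_no_point_of_degree_n (n : ℕ) (hn : 1 ≤ n)
    (L : Finset (Finset (Fin (n ^ 2 + n + 1))))
    (hL : IsPPP n L) (hsat : IsSaturated n L) (p : Fin (n ^ 2 + n + 1)) :
    ppDeg L p ≠ n := by
  intro hdeg
  obtain ⟨hcard, hint⟩ := hL
  classical
  set Lp := L.filter (fun ℓ => p ∈ ℓ) with hLpdef
  have hLpmem : ∀ ℓ ∈ Lp, ℓ ∈ L ∧ p ∈ ℓ := by
    intro ℓ h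
    simpa [hLpdef] using Finset.mem_filter.mp h
  have hLpcard : Lp.card = n := hdeg
  -- two distinct lines through p meet exactly at p
  have hpair : ∀ ℓ₁ ∈ Lp, ∀ ℓ₂ ∈ Lp, ℓ₁ ≠ ℓ₂ → ℓ₁ ∩ ℓ₂ = {p} := by
    intro ℓ₁ h1 ℓ₂ h2 hne
    obtain ⟨h1L, h1p⟩ := hLpmem ℓ₁ h1
    obtain ⟨h2L, h2p⟩ := hLpmem ℓ₂ h2
    obtain ⟨a, ha⟩ := Finset.card_eq_one.mp (hint ℓ₁ h1L ℓ₂ h2L hne)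
    have hpmem : p ∈ ℓ₁ ∩ ℓ₂ := Finset.mem_inter.mpr ⟨h1p, h2p⟩
    rw [ha] at hpmem ⊢
    rw [Finset.mem_singleton] at hpmem
    rw [hpmem]
  -- the covered set
  set B := Lp.biUnion (fun ℓ => ℓ.erase p) with hBdef
  set C := insert p B with hCdef
  have hdisj : ∀ ℓ₁ ∈ Lp, ∀ ℓ₂ ∈ Lp, ℓ₁ ≠ ℓ₂ →
      Disjoint (ℓ₁.erase p) (ℓ₂.erase p) := by
    intro ℓ₁ h1 ℓ₂ h2 hne
    rw [Finset.disjoint_left]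
    intro a ha1 ha2
    have : a ∈ ℓ₁ ∩ ℓ₂ := Finset.mem_inter.mpr
      ⟨Finset.mem_of_mem_erase ha1, Finset.mem_of_mem_erase ha2⟩
    rw [hpair ℓ₁ h1 ℓ₂ h2 hne, Finset.mem_singleton] at this
    exact (Finset.ne_of_mem_erase ha1) this
  have hBcard : B.card = n * n := by
    rw [hBdef, Finset.card_biUnion hdisj]
    rw [Finset.sum_congr rfl (fun ℓ h => ?_), Finset.sum_const, hLpcard, smul_eq_mul]
    obtain ⟨hℓL, hℓp⟩ := hLpmem ℓ h
    rw [Finset.card_erase_of_mem hℓp, hcard ℓ hℓL]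
    omega
  have hpB : p ∉ B := by
    simp only [hBdef, Finset.mem_biUnion]
    rintro ⟨ℓ, -, hp⟩
    exact (Finset.ne_of_mem_erase hp) rfl
  have hCcard : C.card = n ^ 2 + 1 := by
    rw [hCdef, Finset.card_insert_of_notMem hpB, hBcard, sq]
  have hpC : p ∈ C := Finset.mem_insert_self _ _
  set U := Cᶜ with hUdef
  have hUcard : U.card = n := by
    rw [hUdef, Finset.card_compl, hCcard]
    simp only [Fintype.card_fin]
    omega
  have hpU : p ∉ U := by
    rw [hUdef, Finset.mem_compl]
    simp [hpC]
  set ℓ' := insert p U with hℓ'def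
  have hℓ'card : ℓ'.card = n + 1 := by
    rw [hℓ'def, Finset.card_insert_of_notMem hpU, hUcard]
  -- membership in C for points on lines through p
  have hsubC : ∀ ℓ ∈ Lp, ℓ ⊆ C := by
    intro ℓ h x hx
    by_cases hxp : x = p
    · rw [hxp, hCdef]; exact Finset.mem_insert_self _ _
    · rw [hCdef]
      exact Finset.mem_insert_of_mem (Finset.mem_biUnion.mpr
        ⟨ℓ, h, Finset.mem_erase.mpr ⟨hxp, hx⟩⟩)
  -- key: ℓ' meets every line exactly once
  have hmeet : ∀ ℓ ∈ L, (ℓ' ∩ ℓ).card = 1 := by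
    intro m hm
    by_cases hpm : p ∈ m
    · -- m is a line through p: ℓ' ∩ m = {p}
      have hmLp : m ∈ Lp := Finset.mem_filter.mpr ⟨hm, hpm⟩
      have : ℓ' ∩ m = {p} := by
        apply Finset.Subset.antisymm
        · intro x hx
          rw [Finset.mem_inter] at hx
          obtain ⟨hx1, hx2⟩ := hx
          rw [hℓ'def, Finset.mem_insert] at hx1
          rcases hx1 with h | h
          · simp [h]
          · rw [hUdef, Finset.mem_compl] at h
            exact absurd (hsubC m hmLp hx2) h
        · intro x hx
          rw [Finset.mem_singleton] at hx
          subst hx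
          exact Finset.mem_inter.mpr ⟨Finset.mem_insert_self _ _, hpm⟩
      rw [this, Finset.card_singleton]
    · -- m is a line not through p
      have hmint : ℓ' ∩ m = m \ C := by
        ext x
        simp only [hℓ'def, hUdef, Finset.mem_inter, Finset.mem_insert,
          Finset.mem_compl, Finset.mem_sdiff]
        constructor
        · rintro ⟨h | h, hxm⟩
          · exact absurd (h ▸ hxm) hpm
          · exact ⟨hxm, h⟩
        · rintro ⟨hxm, hxC⟩
          exact ⟨Or.inr hxC, hxm⟩
      -- m ∩ C has card n
      have hmC : m ∩ C = Lp.biUnion (fun ℓ => m ∩ ℓ) := by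
        ext x
        simp only [Finset.mem_inter, hCdef, Finset.mem_insert, hBdef,
          Finset.mem_biUnion, Finset.mem_erase]
        constructor
        · rintro ⟨hxm, h | ⟨ℓ, hℓ, -, hxℓ⟩⟩
          · exact absurd (h ▸ hxm) hpm
          · exact ⟨ℓ, hℓ, hxm, hxℓ⟩
        · rintro ⟨ℓ, hℓ, hxm, hxℓ⟩
          refine ⟨hxm, Or.inr ⟨ℓ, hℓ, ?_, hxℓ⟩⟩
          rintro rfl
          exact hpm hxm
      have hmCcard : (m ∩ C).card = n := by
        rw [hmC, Finset.card_biUnion, Finset.sum_congr rfl (fun ℓ h => ?_),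
          Finset.sum_const, hLpcard, smul_eq_mul, mul_one]
        · obtain ⟨hℓL, hℓp⟩ := hLpmem ℓ h
          have hne : m ≠ ℓ := by rintro rfl; exact hpm hℓp
          exact hint m hm ℓ hℓL hne
        · intro ℓ₁ h1 ℓ₂ h2 hne
          simp only [Function.onFun]
          rw [Finset.disjoint_left]
          intro a ha1 ha2
          rw [Finset.mem_inter] at ha1 ha2
          have : a ∈ ℓ₁ ∩ ℓ₂ := Finset.mem_inter.mpr ⟨ha1.2, ha2.2⟩
          rw [hpair ℓ₁ h1 ℓ₂ h2 hne, Finset.mem_singleton] at this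
          exact hpm (this ▸ ha1.1)
      have := Finset.card_inter_add_card_sdiff m C
      rw [hmCcard, hcard m hm] at this
      rw [hmint]
      omega
  -- ℓ' is not in L
  have hℓ'nL : ℓ' ∉ L := by
    intro hmem
    have hℓ'Lp : ℓ' ∈ Lp :=
      Finset.mem_filter.mpr ⟨hmem, Finset.mem_insert_self _ _⟩
    obtain ⟨q, hq⟩ := Finset.card_pos.mp (by rw [hUcard]; omega : 0 < U.card)
    have hqC : q ∈ C := hsubC ℓ' hℓ'Lp (Finset.mem_insert_of_mem hq)
    rw [hUdef, Finset.mem_compl] at hq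
    exact hq hqC
  exact hsat ⟨ℓ', hℓ'nL, hℓ'card, hmeet⟩
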